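/- Let T be a tree on a finite vertex type, let β and γ be real numbers, let H(T) = β·D(T) + γ·A(T), and let v be a vertex of T. Then per(x·I − H(T)) = (x − β·d(v))·per(x·I − H_v(T)) + γ²·Σ_{u ∈ N(v)} per(x·I − H_{uv}(T)), where per denotes the matrix permanent. -/

import Mathlib

open Polynomial Matrix

attribute [local instance] Classical.propDecidable

noncomputable section

/-- The permanent of a square matrix: `per M = ∑_{σ} ∏_i M i (σ i)`. -/
def Matrix.per {n R : Type*} [Fintype n] [DecidableEq n] [CommRing R]
    (M : Matrix n n R) : R :=
  ∑ σ : Equiv.Perm n, ∏ i, M i (σ i)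

/-- The characteristic polynomial `φ(M) = det (x·I - M)`. -/
def phi {n R : Type*} [Fintype n] [DecidableEq n] [CommRing R]
    (M : Matrix n n (Polynomial R)) : Polynomial R :=
  ((Polynomial.X : Polynomial R) • (1 : Matrix n n (Polynomial R)) - M).det

/-- The permanental polynomial `ψ(M) = per (x·I - M)`. -/
def psi {n R : Type*} [Fintype n] [DecidableEq n] [CommRing R]
    (M : Matrix n n (Polynomial R)) : Polynomial R :=
  ((Polynomial.X : Polynomial R) • (1 : Matrix n n (Polynomial R)) - M).per

variable {V : Type*}

/-- The principal submatrix of `M` obtained by deleting the rows and columns indexed by `S`. -/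
def delSub {R : Type*} (M : Matrix V V R) (S : Set V) :
    Matrix {w : V // w ∉ S} {w : V // w ∉ S} R :=
  M.submatrix Subtype.val Subtype.val

/-- `C` is a cycle of `G`: a subgraph of `G` that is connected, has nonempty vertex set,
and in which every vertex of `C` has degree exactly `2` in `C`. -/
def IsCycleSub (G : SimpleGraph V) (C : G.Subgraph) : Prop :=
  C.Connected ∧ C.verts.Nonempty ∧ ∀ w ∈ C.verts, (C.neighborSet w).ncard = 2

variable [Fintype V] [DecidableEq V]

/-- The degree diagonal matrix `D(G)` of a graph. -/
def degMat (R : Type*) [CommRing R] (G : SimpleGraph V) [DecidableRel G.Adj] :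
    Matrix V V R :=
  Matrix.diagonal fun w => (G.degree w : R)

/-- The linear combination matrix `H(G) = β·D(G) + γ·A(G)` over `ℝ[x]`. -/
def hMat (β γ : ℝ) (G : SimpleGraph V) [DecidableRel G.Adj] :
    Matrix V V (Polynomial ℝ) :=
  Polynomial.C β • degMat (Polynomial ℝ) G + Polynomial.C γ • G.adjMatrix (Polynomial ℝ)

/- ### Auxiliary lemmas -/

open Equiv Finset in
lemma delSub_per_eq {V R : Type*} [Fintype V] [DecidableEq V] [CommRing R]
    (M : Matrix V V R) (S : Set V) (e : Equiv.Perm V)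
    (he : ∀ i, i ∉ S → e i = i) :
    ∑ σ ∈ Finset.univ.filter (fun σ : Equiv.Perm V => ∀ i ∈ S, σ i = e i), ∏ i, M i (σ i)
      = (∏ i ∈ S.toFinset, M i (e i)) * (delSub M S).per := by
  classical
  have heS : ∀ i ∈ S, e i ∈ S := by
    intro i hi
    by_contra h
    have h2 : e (e i) = e i := he _ h
    have := e.injective h2
    rw [this] at h
    exact h hi
  have heS' : ∀ a ∈ S, (e⁻¹ : Equiv.Perm V) a ∈ S := by
    intro a ha
    by_contra h
    have : e ((e⁻¹ : Equiv.Perm V) a) = (e⁻¹ : Equiv.Perm V) a := he _ h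
    rw [show ∀ b, e ((e⁻¹ : Equiv.Perm V) b) = b from fun b => e.apply_symm_apply b] at this
    rw [← this] at h
    exact h ha
  have key : ∑ τ : Equiv.Perm {w : V // w ∉ S},
      ((∏ i ∈ S.toFinset, M i (e i)) * ∏ i : {w : V // w ∉ S}, (delSub M S) i (τ i))
      = ∑ σ ∈ Finset.univ.filter (fun σ : Equiv.Perm V => ∀ i ∈ S, σ i = e i), ∏ i, M i (σ i) := by
    refine Finset.sum_bij (fun τ _ => Equiv.Perm.ofSubtype τ * e) ?_ ?_ ?_ ?_
    · intro τ _
      simp only [Finset.mem_filter, Finset.mem_univ, true_and]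
      intro i hi
      simp only [Equiv.Perm.mul_apply]
      exact Equiv.Perm.ofSubtype_apply_of_not_mem τ (by simpa using heS i hi)
    · intro τ _ τ' _ h
      have h2 : Equiv.Perm.ofSubtype τ = Equiv.Perm.ofSubtype τ' := mul_right_cancel h
      ext x
      have := congrArg (fun (g : Equiv.Perm V) => g x) h2
      simpa [Equiv.Perm.ofSubtype_apply_coe, Subtype.ext_iff] using this
    · intro σ hσ
      simp only [Finset.mem_filter, Finset.mem_univ, true_and] at hσ
      set ρ : Equiv.Perm V := σ * e⁻¹ with hρ
      have hfix : ∀ a ∈ S, ρ a = a := by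
        intro a ha
        have h1 : (e⁻¹ : Equiv.Perm V) a ∈ S := heS' a ha
        simp only [hρ, Equiv.Perm.mul_apply]
        rw [hσ _ h1, show ∀ b, e ((e⁻¹ : Equiv.Perm V) b) = b from fun b => e.apply_symm_apply b]
      have hiff : ∀ x, (x ∉ S) ↔ (ρ x ∉ S) := by
        intro x
        constructor
        · intro hx hrx
          have : ρ (ρ x) = ρ x := hfix _ hrx
          have := ρ.injective this
          rw [this] at hrx; exact hx hrx
        · intro hx
          by_contra hm
          have hm' : x ∈ S := hm
          rw [hfix x hm'] at hx
          exact hx hm'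
      refine ⟨ρ.subtypePerm (fun x => (hiff x).symm), Finset.mem_univ _, ?_⟩
      have : Equiv.Perm.ofSubtype (ρ.subtypePerm (p := fun x => x ∉ S) (fun x => (hiff x).symm)) = ρ := by
        apply Equiv.Perm.ofSubtype_subtypePerm
        intro x hx
        by_contra hxS
        exact hx (hfix x hxS)
      show Equiv.Perm.ofSubtype (ρ.subtypePerm (fun x => (hiff x).symm)) * e = σ
      rw [this, hρ, mul_assoc, inv_mul_cancel, mul_one]
    · intro τ _
      have hsplit : ∏ i, M i ((Equiv.Perm.ofSubtype τ * e) i)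
          = (∏ i ∈ S.toFinset, M i ((Equiv.Perm.ofSubtype τ * e) i)) *
            ∏ i ∈ S.toFinsetᶜ, M i ((Equiv.Perm.ofSubtype τ * e) i) :=
        (Finset.prod_mul_prod_compl _ _).symm
      rw [hsplit]
      congr 1
      · apply Finset.prod_congr rfl
        intro i hi
        rw [Set.mem_toFinset] at hi
        congr 1
        simp only [Equiv.Perm.mul_apply]
        exact (Equiv.Perm.ofSubtype_apply_of_not_mem τ (by simpa using heS i hi)).symm
      · rw [Finset.prod_subtype (p := fun x => x ∉ S) (S.toFinsetᶜ)
          (fun x => by simp) (fun i => M i ((Equiv.Perm.ofSubtype τ * e) i))]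
        apply Finset.prod_congr rfl
        intro i _
        simp only [Equiv.Perm.mul_apply, he i.1 i.2, delSub, Matrix.submatrix_apply]
        congr 1
        exact (Equiv.Perm.ofSubtype_apply_coe τ i).symm
  rw [← key, Matrix.per, Finset.mul_sum]

def walkUpTo {W : Type*} (G : SimpleGraph W) (f : ℕ → W) :
    (n : ℕ) → (∀ j, j < n → G.Adj (f j) (f (j+1))) → G.Walk (f 0) (f n)
  | 0, _ => SimpleGraph.Walk.nil
  | n+1, h => (walkUpTo G f n fun j hj => h j (Nat.lt_succ_of_lt hj)).concat
      (h n (Nat.lt_succ_self n))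

lemma walkUpTo_support {W : Type*} (G : SimpleGraph W) (f : ℕ → W) :
    ∀ (n : ℕ) (h : ∀ j, j < n → G.Adj (f j) (f (j+1))),
      (walkUpTo G f n h).support = (List.range (n+1)).map f
  | 0, _ => by simp [walkUpTo, List.range_succ]
  | n+1, h => by
    rw [walkUpTo, SimpleGraph.Walk.support_concat, walkUpTo_support G f n,
      List.range_succ (n := n+1), List.map_append]
    simp [List.concat_eq_append]

lemma walkUpTo_length {W : Type*} (G : SimpleGraph W) (f : ℕ → W) :
    ∀ (n : ℕ) (h : ∀ j, j < n → G.Adj (f j) (f (j+1))),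
      (walkUpTo G f n h).length = n
  | 0, _ => rfl
  | n+1, h => by
    rw [walkUpTo, SimpleGraph.Walk.length_concat, walkUpTo_length G f n]

lemma no_long_cycle {W : Type*} [Fintype W] [DecidableEq W] {T : SimpleGraph W}
    (hT : T.IsAcyclic) (σ : Equiv.Perm W) (v : W)
    (hadj : ∀ i, σ i ≠ i → T.Adj i (σ i)) (h1 : σ v ≠ v) : σ (σ v) = v := by
  by_contra h2
  set k := Function.minimalPeriod (⇑σ) v with hk
  have hper : Function.IsPeriodicPt (⇑σ) (orderOf σ) v := by
    have h : σ ^ (orderOf σ) = 1 := pow_orderOf_eq_one σ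
    unfold Function.IsPeriodicPt Function.IsFixedPt
    rw [Equiv.Perm.iterate_eq_pow, h]
    rfl
  have hkpos : 0 < k := hper.minimalPeriod_pos (orderOf_pos σ)
  have hkper : (⇑σ)^[k] v = v := Function.iterate_minimalPeriod
  have hinj := Function.iterate_injOn_Iio_minimalPeriod (f := ⇑σ) (x := v)
  have hk1 : k ≠ 1 := by
    intro h; rw [h] at hkper; simp at hkper; exact h1 hkper
  have hk2 : k ≠ 2 := by
    intro h; rw [h] at hkper
    simp [Function.iterate_succ_apply'] at hkper
    exact h2 hkper
  have hk3 : 3 ≤ k := by omega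
  have hdist : ∀ m < k, ∀ n < k, (⇑σ)^[m] v = (⇑σ)^[n] v → m = n := by
    intro m hm n hn hmn
    exact hinj (Set.mem_Iio.mpr hm) (Set.mem_Iio.mpr hn) hmn
  set f : ℕ → W := fun j => (⇑σ)^[j+1] v with hf
  have hfadj : ∀ j, j < k - 1 → T.Adj (f j) (f (j+1)) := by
    intro j hj
    have hne : σ (f j) ≠ f j := by
      intro heq
      have : (⇑σ)^[j+2] v = (⇑σ)^[j+1] v := by
        rw [Function.iterate_succ_apply' (⇑σ) (j+1) v]; exact heq
      rcases Nat.lt_or_ge (j+2) k with hlt | hge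
      · exact absurd (hdist _ hlt _ (by omega) this) (by omega)
      · rw [show j + 2 = k by omega, hkper] at this
        have := hdist 0 (by omega) (j+1) (by omega) this
        omega
    have := hadj (f j) hne
    rwa [show σ (f j) = f (j+1) from (Function.iterate_succ_apply' (⇑σ) (j+1) v).symm] at this
  have h0 : f 0 = σ v := by simp [hf]
  have hke : f (k-1) = v := by
    simp only [hf]
    rw [show k - 1 + 1 = k by omega, hkper]
  set p₂ := ((walkUpTo T f (k-1) hfadj).copy h0 hke) with hp₂
  have hsupp : p₂.support = (List.range k).map f := by
    rw [hp₂, SimpleGraph.Walk.support_copy, walkUpTo_support, show k - 1 + 1 = k by omega]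
  have hnodup : p₂.support.Nodup := by
    rw [hsupp]
    apply List.Nodup.map_on _ List.nodup_range
    intro a ha b hb hab
    rw [List.mem_range] at ha hb
    simp only [hf] at hab
    rcases Nat.lt_or_ge (a+1) k with ha' | ha'
    · rcases Nat.lt_or_ge (b+1) k with hb' | hb'
      · exact Nat.succ_injective (hdist _ ha' _ hb' hab)
      · have hbk : b + 1 = k := by omega
        rw [hbk, hkper] at hab
        have := hdist _ ha' 0 (by omega) hab
        omega
    · have hak : a + 1 = k := by omega
      rw [hak, hkper] at hab
      rcases Nat.lt_or_ge (b+1) k with hb' | hb'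
      · have := hdist 0 (by omega) _ hb' hab
        omega
      · omega
  have hpath2 : p₂.IsPath := by
    rw [SimpleGraph.Walk.isPath_def]; exact hnodup
  have hadjv : T.Adj (σ v) v := (hadj v h1).symm
  set p₁ : T.Walk (σ v) v := SimpleGraph.Walk.cons hadjv SimpleGraph.Walk.nil with hp₁
  have hpath1 : p₁.IsPath := by
    rw [SimpleGraph.Walk.isPath_def, hp₁]
    simp [h1]
  have := SimpleGraph.isAcyclic_iff_path_unique.mp hT ⟨p₁, hpath1⟩ ⟨p₂, hpath2⟩
  have hlen : p₁.length = p₂.length := by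
    rw [show p₁ = p₂ from congrArg Subtype.val this]
  rw [hp₁] at hlen
  simp at hlen
  rw [hp₂, SimpleGraph.Walk.length_copy, walkUpTo_length] at hlen
  omega

theorem tree_per_vertex_recursion
    {V : Type*} [Fintype V] [DecidableEq V]
    (T : SimpleGraph V) [DecidableRel T.Adj] (hT : T.IsTree) (β γ : ℝ) (v : V) :
    psi (hMat β γ T) =
      (Polynomial.X - Polynomial.C β * (T.degree v : Polynomial ℝ)) * psi (delSub (hMat β γ T) {v})
        + Polynomial.C (γ ^ 2) * ∑ u ∈ T.neighborFinset v, psi (delSub (hMat β γ T) {u, v}) := by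
  classical
  set M : Matrix V V (Polynomial ℝ) :=
    (Polynomial.X : Polynomial ℝ) • (1 : Matrix V V (Polynomial ℝ)) - hMat β γ T with hM
  -- entry values
  have hMvv : M v v = Polynomial.X - Polynomial.C β * (T.degree v : Polynomial ℝ) := by
    simp [hM, hMat, degMat, Matrix.sub_apply, Matrix.add_apply, Matrix.smul_apply,
      Matrix.one_apply_eq, Matrix.diagonal_apply_eq]
  have hMoff : ∀ i j : V, T.Adj i j → M i j = -(Polynomial.C γ) := by
    intro i j hij
    have hne : i ≠ j := hij.ne
    simp [hM, hMat, degMat, Matrix.sub_apply, Matrix.add_apply, Matrix.smul_apply,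
      Matrix.one_apply_ne hne, Matrix.diagonal_apply_ne _ hne, hij]
  have hMz : ∀ i j : V, i ≠ j → ¬ T.Adj i j → M i j = 0 := by
    intro i j hne hij
    simp [hM, hMat, degMat, Matrix.sub_apply, Matrix.add_apply, Matrix.smul_apply,
      Matrix.one_apply_ne hne, Matrix.diagonal_apply_ne _ hne, hij]
  -- delSub commutes with xI - ·
  have hshift : ∀ S : Set V, (delSub M S).per = psi (delSub (hMat β γ T) S) := by
    intro S
    have : delSub M S = (Polynomial.X : Polynomial ℝ) •
        (1 : Matrix {w : V // w ∉ S} {w : V // w ∉ S} (Polynomial ℝ))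
        - delSub (hMat β γ T) S := by
      ext i j
      by_cases hij : i = j
      · subst hij
        simp [delSub, hM, Matrix.sub_apply, Matrix.smul_apply, Matrix.one_apply_eq]
      · have hij' : (i : V) ≠ (j : V) := fun h => hij (Subtype.ext h)
        simp [delSub, hM, Matrix.sub_apply, Matrix.smul_apply,
          Matrix.one_apply_ne hij, Matrix.one_apply_ne hij']
    rw [this, psi]
  have hper : psi (hMat β γ T) = ∑ σ : Equiv.Perm V, ∏ i, M i (σ i) := rfl
  rw [hper]
  rw [← Finset.sum_filter_add_sum_filter_not Finset.univ (fun σ : Equiv.Perm V => σ v = v)]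
  -- Part A
  have hA : ∑ σ ∈ Finset.univ.filter (fun σ : Equiv.Perm V => σ v = v), ∏ i, M i (σ i)
      = (Polynomial.X - Polynomial.C β * (T.degree v : Polynomial ℝ)) *
        psi (delSub (hMat β γ T) {v}) := by
    have hval := delSub_per_eq M ({v} : Set V) 1 (fun i _ => rfl)
    rw [hshift] at hval
    rw [Set.toFinset_singleton, Finset.prod_singleton] at hval
    simp only [Equiv.Perm.coe_one, id_eq] at hval
    rw [hMvv] at hval
    refine Eq.trans (Eq.trans ?_ hval) ?_
    · refine Finset.sum_congr ?_ (fun _ _ => rfl)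
      ext σ
      simp only [Finset.mem_filter, Finset.mem_univ, true_and, Set.mem_singleton_iff]
      constructor
      · intro h i hi; subst hi; simpa using h
      · intro h; simpa using h v rfl
    · congr!
  rw [hA]
  congr 1
  -- Part B
  set good : Equiv.Perm V → Prop := fun σ => T.Adj v (σ v) ∧ σ (σ v) = v with hgood
  have hsub : Finset.univ.filter good ⊆
      Finset.univ.filter (fun σ : Equiv.Perm V => ¬ σ v = v) := by
    intro σ hσ
    have hσ' : T.Adj v (σ v) ∧ σ (σ v) = v := (Finset.mem_filter.mp hσ).2
    rw [Finset.mem_filter]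
    exact ⟨Finset.mem_univ _, fun h => by rw [h] at hσ'; exact T.irrefl hσ'.1⟩
  have hzero : ∀ σ ∈ Finset.univ.filter (fun σ : Equiv.Perm V => ¬ σ v = v),
      σ ∉ Finset.univ.filter good → ∏ i, M i (σ i) = 0 := by
    intro σ hσ hng
    have hnv : σ v ≠ v := (Finset.mem_filter.mp hσ).2
    have hng' : ¬ (T.Adj v (σ v) ∧ σ (σ v) = v) := by
      intro hg
      exact hng (Finset.mem_filter.mpr ⟨Finset.mem_univ _, hg⟩)
    by_cases hA' : T.Adj v (σ v)
    · have h2 : σ (σ v) ≠ v := fun h => hng' ⟨hA', h⟩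
      by_contra hprod
      have hfac : ∀ i : V, M i (σ i) ≠ 0 := by
        intro i h0
        exact hprod (Finset.prod_eq_zero (Finset.mem_univ i) h0)
      have hadj : ∀ i, σ i ≠ i → T.Adj i (σ i) := by
        intro i hne
        by_contra hna
        exact hfac i (hMz i (σ i) (Ne.symm hne) hna)
      exact h2 (no_long_cycle hT.IsAcyclic σ v hadj hnv)
    · exact Finset.prod_eq_zero (Finset.mem_univ v) (hMz v (σ v) (Ne.symm hnv) hA')
  rw [← Finset.sum_subset hsub hzero]
  -- fiber decomposition over neighbours
  have hbi : Finset.univ.filter good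
      = (T.neighborFinset v).biUnion
          (fun u => Finset.univ.filter (fun σ : Equiv.Perm V => σ v = u ∧ σ u = v)) := by
    ext σ
    simp only [Finset.mem_filter, Finset.mem_univ, true_and, Finset.mem_biUnion,
      SimpleGraph.mem_neighborFinset, hgood]
    constructor
    · rintro ⟨h1, h2⟩
      exact ⟨σ v, h1, rfl, h2⟩
    · rintro ⟨u, hu, h1, h2⟩
      subst h1
      exact ⟨hu, h2⟩
  rw [hbi, Finset.sum_biUnion]
  · -- each fiber
    have hfiber : ∀ u ∈ T.neighborFinset v,
        ∑ σ ∈ Finset.univ.filter (fun σ : Equiv.Perm V => σ v = u ∧ σ u = v), ∏ i, M i (σ i)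
        = Polynomial.C (γ ^ 2) * psi (delSub (hMat β γ T) {u, v}) := by
      intro u hu
      rw [SimpleGraph.mem_neighborFinset] at hu
      have huv : u ≠ v := hu.ne'
      have hswap : ∀ i : V, i ∉ ({u, v} : Set V) → Equiv.swap u v i = i := by
        intro i hi
        simp only [Set.mem_insert_iff, Set.mem_singleton_iff, not_or] at hi
        exact Equiv.swap_apply_of_ne_of_ne hi.1 hi.2
      have hval := delSub_per_eq M ({u, v} : Set V) (Equiv.swap u v) hswap
      rw [hshift] at hval
      simp only [Set.toFinset_insert, Set.toFinset_singleton] at hval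
      rw [Finset.prod_insert (by simpa using huv), Finset.prod_singleton,
        Equiv.swap_apply_left, Equiv.swap_apply_right, hMoff u v hu.symm, hMoff v u hu,
        neg_mul_neg, ← Polynomial.C_mul, ← sq] at hval
      refine Eq.trans (Eq.trans ?_ hval) ?_
      · refine Finset.sum_congr ?_ (fun _ _ => rfl)
        ext σ
        simp only [Finset.mem_filter, Finset.mem_univ, true_and]
        constructor
        · rintro ⟨h1, h2⟩ i hi
          rcases hi with hi | hi
          · subst hi; rw [Equiv.swap_apply_left]; exact h2
          · rw [Set.mem_singleton_iff] at hi
            subst hi; rw [Equiv.swap_apply_right]; exact h1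
        · intro h
          refine ⟨?_, ?_⟩
          · have := h v (by simp)
            rwa [Equiv.swap_apply_right] at this
          · have := h u (by simp)
            rwa [Equiv.swap_apply_left] at this
      · congr!
    rw [Finset.sum_congr rfl hfiber, ← Finset.mul_sum]
  · -- disjointness
    intro u₁ hu₁ u₂ hu₂ hne
    simp only [Function.onFun]
    rw [Finset.disjoint_left]
    intro σ h₁ h₂
    have e₁ : σ v = u₁ := (Finset.mem_filter.mp h₁).2.1
    have e₂ : σ v = u₂ := (Finset.mem_filter.mp h₂).2.1
    exact hne (by rw [← e₁, ← e₂])
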